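/- Doubly robust personalized pricing estimators (quadratic revenue model). Let (Ω, ℱ, P) be a probability space, Z a measurable space, and z : Ω → Z, p : Ω → ℝ (price), r : Ω → ℝ (revenue) measurable, with all displayed conditional expectations well defined. Let 𝔪 and 𝔤 denote the σ-algebras generated by z and by (p, z) respectively. Suppose E[r ∣ 𝔤] = (a ∘ z)·p + (b ∘ z)·p² almost surely for measurable a, b : Z → ℝ, and let μ₂, μ₃, μ₄ : Z → ℝ be measurable with E[p^k ∣ 𝔪] = μ_k ∘ z almost surely for k = 2, 3, 4, and with D(z) := μ₂(z)·μ₄(z) − μ₃(z)² nonzero almost surely. For any measurable â, b̂ : Z → ℝ define a_DR := â(z) + ((μ₄(z)·p − μ₃(z)·p²)/D(z))·(r − â(z)·p − b̂(z)·p²) and b_DR := b̂(z) + ((μ₂(z)·p² − μ₃(z)·p)/D(z))·(r − â(z)·p − b̂(z)·p²). Then E[a_DR ∣ 𝔪] = a ∘ z and E[b_DR ∣ 𝔪] = b ∘ z almost surely. -/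

import Mathlib

open MeasureTheory

theorem pricing_master
    {Ω Z : Type*} [mΩ : MeasurableSpace Ω] [mZ : MeasurableSpace Z]
    (μ : Measure Ω) [IsProbabilityMeasure μ]
    (z : Ω → Z) (pr r : Ω → ℝ)
    (hz : Measurable z) (hpr : Measurable pr)
    (a b ah bh m2 m3 m4 w1 w2 c ch : Z → ℝ)
    (ham : Measurable a) (hbm : Measurable b) (hahm : Measurable ah) (hbhm : Measurable bh)
    (hw1m : Measurable w1) (hw2m : Measurable w2) (hchm : Measurable ch)
    (hrev : μ[r | MeasurableSpace.comap (fun ω => (pr ω, z ω)) inferInstance]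
        =ᵐ[μ] fun ω => a (z ω) * pr ω + b (z ω) * pr ω ^ 2)
    (hm2 : μ[fun ω => pr ω ^ 2 | MeasurableSpace.comap z inferInstance]
        =ᵐ[μ] fun ω => m2 (z ω))
    (hm3 : μ[fun ω => pr ω ^ 3 | MeasurableSpace.comap z inferInstance]
        =ᵐ[μ] fun ω => m3 (z ω))
    (hm4 : μ[fun ω => pr ω ^ 4 | MeasurableSpace.comap z inferInstance]
        =ᵐ[μ] fun ω => m4 (z ω))
    (hintr : Integrable r μ)
    (hintp2 : Integrable (fun ω => pr ω ^ 2) μ)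
    (hintp3 : Integrable (fun ω => pr ω ^ 3) μ)
    (hintp4 : Integrable (fun ω => pr ω ^ 4) μ)
    (hinte : Integrable (fun ω => r ω - ah (z ω) * pr ω - bh (z ω) * pr ω ^ 2) μ)
    (hintpe : Integrable (fun ω =>
      pr ω * (r ω - ah (z ω) * pr ω - bh (z ω) * pr ω ^ 2)) μ)
    (hintp2e : Integrable (fun ω =>
      pr ω ^ 2 * (r ω - ah (z ω) * pr ω - bh (z ω) * pr ω ^ 2)) μ)
    (halg : ∀ᵐ ω ∂μ, ch (z ω)
        + (w1 (z ω) * ((a (z ω) - ah (z ω)) * m2 (z ω) + (b (z ω) - bh (z ω)) * m3 (z ω))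
          + w2 (z ω) * ((a (z ω) - ah (z ω)) * m3 (z ω) + (b (z ω) - bh (z ω)) * m4 (z ω)))
        = c (z ω))
    (hintest : Integrable (fun ω => ch (z ω)
        + (w1 (z ω) * (pr ω * (r ω - ah (z ω) * pr ω - bh (z ω) * pr ω ^ 2))
          + w2 (z ω) * (pr ω ^ 2 * (r ω - ah (z ω) * pr ω - bh (z ω) * pr ω ^ 2)))) μ) :
    μ[fun ω => ch (z ω)
        + (w1 (z ω) * (pr ω * (r ω - ah (z ω) * pr ω - bh (z ω) * pr ω ^ 2))
          + w2 (z ω) * (pr ω ^ 2 * (r ω - ah (z ω) * pr ω - bh (z ω) * pr ω ^ 2)))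
      | MeasurableSpace.comap z inferInstance] =ᵐ[μ] fun ω => c (z ω) := by
  set m := MeasurableSpace.comap z (inferInstance : MeasurableSpace Z) with hm_def
  set g := MeasurableSpace.comap (fun ω => (pr ω, z ω))
      (inferInstance : MeasurableSpace (ℝ × Z)) with hg_def
  have hm : m ≤ mΩ := by rw [hm_def]; exact hz.comap_le
  have hg : g ≤ mΩ := by rw [hg_def]; exact (hpr.prodMk hz).comap_le
  have hmg : m ≤ g := by
    have h1 : m = MeasurableSpace.comap (fun ω => (pr ω, z ω))
        (MeasurableSpace.comap Prod.snd inferInstance) := by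
      rw [MeasurableSpace.comap_comp]; rfl
    rw [h1]
    exact MeasurableSpace.comap_mono measurable_snd.comap_le
  have hzm : Measurable[m] z := comap_measurable z
  have hzg : Measurable[g] z :=
    measurable_snd.comp (comap_measurable fun ω => (pr ω, z ω))
  have hprg : Measurable[g] pr :=
    measurable_fst.comp (comap_measurable fun ω => (pr ω, z ω))
  set e : Ω → ℝ := fun ω => r ω - ah (z ω) * pr ω - bh (z ω) * pr ω ^ 2 with he_def
  -- nuisance fit integrable
  have hs_int : Integrable (fun ω => ah (z ω) * pr ω + bh (z ω) * pr ω ^ 2) μ := by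
    have h0 : Integrable (fun ω => r ω - e ω) μ := hintr.sub hinte
    exact h0.congr (Filter.Eventually.of_forall fun ω => by simp only [he_def]; ring)
  have hsm_s : StronglyMeasurable[g] fun ω => ah (z ω) * pr ω + bh (z ω) * pr ω ^ 2 :=
    (((hahm.comp hzg).mul hprg).add ((hbhm.comp hzg).mul (hprg.pow_const 2))).stronglyMeasurable
  -- conditional mean of residual given g
  have heg : μ[e | g] =ᵐ[μ]
      fun ω => (a (z ω) - ah (z ω)) * pr ω + (b (z ω) - bh (z ω)) * pr ω ^ 2 := by
    have h0 : e =ᵐ[μ] fun ω => r ω - (ah (z ω) * pr ω + bh (z ω) * pr ω ^ 2) :=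
      Filter.Eventually.of_forall fun ω => by simp only [he_def]; ring
    have h1 := (condExp_congr_ae (m := g) h0).trans (condExp_sub hintr hs_int g)
    rw [condExp_of_stronglyMeasurable hg hsm_s hs_int] at h1
    filter_upwards [h1, hrev] with ω h1ω hrevω
    simp only [Pi.sub_apply] at h1ω
    rw [h1ω, hrevω]
    ring
  -- conditional means of p*e and p^2*e given g
  have hpeg : μ[fun ω => pr ω * e ω | g] =ᵐ[μ]
      fun ω => (a (z ω) - ah (z ω)) * pr ω ^ 2 + (b (z ω) - bh (z ω)) * pr ω ^ 3 := by
    have h1 : μ[fun ω => pr ω * e ω | g] =ᵐ[μ] pr * μ[e | g] :=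
      condExp_mul_of_stronglyMeasurable_left hprg.stronglyMeasurable hintpe hinte
    refine h1.trans ?_
    filter_upwards [heg] with ω hω
    simp only [Pi.mul_apply]
    rw [hω]; ring
  have hp2eg : μ[fun ω => pr ω ^ 2 * e ω | g] =ᵐ[μ]
      fun ω => (a (z ω) - ah (z ω)) * pr ω ^ 3 + (b (z ω) - bh (z ω)) * pr ω ^ 4 := by
    have h1 : μ[fun ω => pr ω ^ 2 * e ω | g] =ᵐ[μ] (fun ω => pr ω ^ 2) * μ[e | g] :=
      condExp_mul_of_stronglyMeasurable_left (hprg.pow_const 2).stronglyMeasurable hintp2e hinte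
    refine h1.trans ?_
    filter_upwards [heg] with ω hω
    simp only [Pi.mul_apply]
    rw [hω]; ring
  have hq1_int : Integrable (fun ω =>
      (a (z ω) - ah (z ω)) * pr ω ^ 2 + (b (z ω) - bh (z ω)) * pr ω ^ 3) μ :=
    integrable_condExp.congr hpeg
  have hq2_int : Integrable (fun ω =>
      (a (z ω) - ah (z ω)) * pr ω ^ 3 + (b (z ω) - bh (z ω)) * pr ω ^ 4) μ :=
    integrable_condExp.congr hp2eg
  -- bounding sets
  set N : Z → ℝ := fun x => |a x| + |ah x| + |b x| + |bh x| + |w1 x| + |w2 x| + |ch x|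
    with hN_def
  have hNm : Measurable N := by
    rw [hN_def]
    exact ((((((ham.abs.add hahm.abs).add hbm.abs).add hbhm.abs).add hw1m.abs).add
      hw2m.abs).add hchm.abs)
  set A : ℕ → Set Ω := fun n => {ω | N (z ω) ≤ n} with hA_def
  have hAm : ∀ n, MeasurableSet[m] (A n) := by
    intro n
    rw [hm_def]
    exact ⟨{x | N x ≤ n}, measurableSet_le hNm measurable_const, rfl⟩
  have hAm0 : ∀ n, MeasurableSet[mΩ] (A n) := fun n => hm _ (hAm n)
  have hAg : ∀ n, MeasurableSet[g] (A n) := fun n => hmg _ (hAm n)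
  set EST : Ω → ℝ := fun ω => ch (z ω)
      + (w1 (z ω) * (pr ω * e ω) + w2 (z ω) * (pr ω ^ 2 * e ω)) with hEST_def
  have key : ∀ n : ℕ, ∀ᵐ ω ∂μ.restrict (A n), (μ[EST | m]) ω = c (z ω) := by
    intro n
    set ν := μ.restrict (A n) with hν_def
    haveI : IsFiniteMeasure ν := by rw [hν_def]; infer_instance
    have hmem : ∀ᵐ ω ∂ν, ω ∈ A n := by rw [hν_def]; exact ae_restrict_mem (hAm0 n)
    have hbound : ∀ᵐ ω ∂ν, N (z ω) ≤ n := hmem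
    have habs : ∀ᵐ ω ∂ν, |a (z ω)| ≤ n ∧ |ah (z ω)| ≤ n ∧ |b (z ω)| ≤ n ∧ |bh (z ω)| ≤ n
        ∧ |w1 (z ω)| ≤ n ∧ |w2 (z ω)| ≤ n ∧ |ch (z ω)| ≤ n := by
      filter_upwards [hbound] with ω hω
      simp only [hN_def] at hω
      have n1 := abs_nonneg (a (z ω)); have n2 := abs_nonneg (ah (z ω))
      have n3 := abs_nonneg (b (z ω)); have n4 := abs_nonneg (bh (z ω))
      have n5 := abs_nonneg (w1 (z ω)); have n6 := abs_nonneg (w2 (z ω))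
      have n7 := abs_nonneg (ch (z ω))
      exact ⟨by linarith, by linarith, by linarith, by linarith, by linarith, by linarith,
        by linarith⟩
    -- generic multiplier integrability
    have hmul_int : ∀ (cf : Z → ℝ), Measurable cf → (∀ᵐ ω ∂ν, |cf (z ω)| ≤ (2 * n : ℝ)) →
        ∀ (f : Ω → ℝ), Integrable f μ → Integrable (fun ω => cf (z ω) * f ω) ν := by
      intro cf hcf hb f hf
      refine Integrable.mono' ((hf.restrict (s := A n)).abs.const_mul (2 * n))
        (((hcf.comp hz).aestronglyMeasurable.mul hf.aestronglyMeasurable).restrict) ?_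
      filter_upwards [hb] with ω hω
      rw [Real.norm_eq_abs, abs_mul]
      exact mul_le_mul_of_nonneg_right hω (abs_nonneg _)
    -- conditional moments under the restricted measure
    have hm2v : (μ.restrict (A n))[fun ω => pr ω ^ 2 | m] =ᵐ[μ.restrict (A n)]
        fun ω => m2 (z ω) :=
      (condExp_restrict_ae_eq_restrict hm (hAm n) hintp2).trans (ae_restrict_of_ae hm2)
    have hm3v : (μ.restrict (A n))[fun ω => pr ω ^ 3 | m] =ᵐ[μ.restrict (A n)]
        fun ω => m3 (z ω) :=
      (condExp_restrict_ae_eq_restrict hm (hAm n) hintp3).trans (ae_restrict_of_ae hm3)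
    have hm4v : (μ.restrict (A n))[fun ω => pr ω ^ 4 | m] =ᵐ[μ.restrict (A n)]
        fun ω => m4 (z ω) :=
      (condExp_restrict_ae_eq_restrict hm (hAm n) hintp4).trans (ae_restrict_of_ae hm4)
    have hnn : (0:ℝ) ≤ (n:ℝ) := Nat.cast_nonneg n
    -- conditional means of p*e and p^2*e given m, under the restricted measure
    have hint1 : Integrable (fun ω => (a (z ω) - ah (z ω)) * pr ω ^ 2) (μ.restrict (A n)) :=
      hmul_int _ (ham.sub hahm) (by
        filter_upwards [habs] with ω hω
        simp only [Pi.sub_apply]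
        have := abs_sub (a (z ω)) (ah (z ω)); linarith [hω.1, hω.2.1]) _ hintp2
    have hint2 : Integrable (fun ω => (b (z ω) - bh (z ω)) * pr ω ^ 3) (μ.restrict (A n)) :=
      hmul_int _ (hbm.sub hbhm) (by
        filter_upwards [habs] with ω hω
        simp only [Pi.sub_apply]
        have := abs_sub (b (z ω)) (bh (z ω)); linarith [hω.2.2.1, hω.2.2.2.1]) _ hintp3
    have hint3 : Integrable (fun ω => (a (z ω) - ah (z ω)) * pr ω ^ 3) (μ.restrict (A n)) :=
      hmul_int _ (ham.sub hahm) (by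
        filter_upwards [habs] with ω hω
        simp only [Pi.sub_apply]
        have := abs_sub (a (z ω)) (ah (z ω)); linarith [hω.1, hω.2.1]) _ hintp3
    have hint4 : Integrable (fun ω => (b (z ω) - bh (z ω)) * pr ω ^ 4) (μ.restrict (A n)) :=
      hmul_int _ (hbm.sub hbhm) (by
        filter_upwards [habs] with ω hω
        simp only [Pi.sub_apply]
        have := abs_sub (b (z ω)) (bh (z ω)); linarith [hω.2.2.1, hω.2.2.2.1]) _ hintp4
    have hq1v : (μ.restrict (A n))[fun ω => pr ω * e ω | m] =ᵐ[μ.restrict (A n)]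
        fun ω => (a (z ω) - ah (z ω)) * m2 (z ω) + (b (z ω) - bh (z ω)) * m3 (z ω) := by
      have t1 : (μ.restrict (A n))[fun ω => pr ω * e ω | m] =ᵐ[μ.restrict (A n)]
          (μ.restrict (A n))[(μ.restrict (A n))[fun ω => pr ω * e ω | g] | m] :=
        (condExp_condExp_of_le hmg hg).symm
      have t2 : (μ.restrict (A n))[fun ω => pr ω * e ω | g] =ᵐ[μ.restrict (A n)]
          fun ω => (a (z ω) - ah (z ω)) * pr ω ^ 2 + (b (z ω) - bh (z ω)) * pr ω ^ 3 :=
        (condExp_restrict_ae_eq_restrict hg (hAg n) hintpe).trans (ae_restrict_of_ae hpeg)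
      refine t1.trans ((condExp_congr_ae t2).trans ?_)
      have s1 : (μ.restrict (A n))[fun ω =>
            (a (z ω) - ah (z ω)) * pr ω ^ 2 + (b (z ω) - bh (z ω)) * pr ω ^ 3 | m]
          =ᵐ[μ.restrict (A n)]
          (μ.restrict (A n))[fun ω => (a (z ω) - ah (z ω)) * pr ω ^ 2 | m]
          + (μ.restrict (A n))[fun ω => (b (z ω) - bh (z ω)) * pr ω ^ 3 | m] :=
        condExp_add hint1 hint2 m
      have p1 : (μ.restrict (A n))[fun ω => (a (z ω) - ah (z ω)) * pr ω ^ 2 | m]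
          =ᵐ[μ.restrict (A n)] fun ω => (a (z ω) - ah (z ω))
            * ((μ.restrict (A n))[fun ω => pr ω ^ 2 | m]) ω :=
        condExp_mul_of_stronglyMeasurable_left (((ham.sub hahm).comp hzm).stronglyMeasurable)
          hint1 (hintp2.restrict)
      have p2 : (μ.restrict (A n))[fun ω => (b (z ω) - bh (z ω)) * pr ω ^ 3 | m]
          =ᵐ[μ.restrict (A n)] fun ω => (b (z ω) - bh (z ω))
            * ((μ.restrict (A n))[fun ω => pr ω ^ 3 | m]) ω :=
        condExp_mul_of_stronglyMeasurable_left (((hbm.sub hbhm).comp hzm).stronglyMeasurable)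
          hint2 (hintp3.restrict)
      refine s1.trans ?_
      filter_upwards [p1, p2, hm2v, hm3v] with ω h1 h2 h3 h4
      simp only [Pi.add_apply]
      rw [h1, h2, h3, h4]
    have hq2v : (μ.restrict (A n))[fun ω => pr ω ^ 2 * e ω | m] =ᵐ[μ.restrict (A n)]
        fun ω => (a (z ω) - ah (z ω)) * m3 (z ω) + (b (z ω) - bh (z ω)) * m4 (z ω) := by
      have t1 : (μ.restrict (A n))[fun ω => pr ω ^ 2 * e ω | m] =ᵐ[μ.restrict (A n)]
          (μ.restrict (A n))[(μ.restrict (A n))[fun ω => pr ω ^ 2 * e ω | g] | m] :=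
        (condExp_condExp_of_le hmg hg).symm
      have t2 : (μ.restrict (A n))[fun ω => pr ω ^ 2 * e ω | g] =ᵐ[μ.restrict (A n)]
          fun ω => (a (z ω) - ah (z ω)) * pr ω ^ 3 + (b (z ω) - bh (z ω)) * pr ω ^ 4 :=
        (condExp_restrict_ae_eq_restrict hg (hAg n) hintp2e).trans (ae_restrict_of_ae hp2eg)
      refine t1.trans ((condExp_congr_ae t2).trans ?_)
      have s1 : (μ.restrict (A n))[fun ω =>
            (a (z ω) - ah (z ω)) * pr ω ^ 3 + (b (z ω) - bh (z ω)) * pr ω ^ 4 | m]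
          =ᵐ[μ.restrict (A n)]
          (μ.restrict (A n))[fun ω => (a (z ω) - ah (z ω)) * pr ω ^ 3 | m]
          + (μ.restrict (A n))[fun ω => (b (z ω) - bh (z ω)) * pr ω ^ 4 | m] :=
        condExp_add hint3 hint4 m
      have p1 : (μ.restrict (A n))[fun ω => (a (z ω) - ah (z ω)) * pr ω ^ 3 | m]
          =ᵐ[μ.restrict (A n)] fun ω => (a (z ω) - ah (z ω))
            * ((μ.restrict (A n))[fun ω => pr ω ^ 3 | m]) ω :=
        condExp_mul_of_stronglyMeasurable_left (((ham.sub hahm).comp hzm).stronglyMeasurable)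
          hint3 (hintp3.restrict)
      have p2 : (μ.restrict (A n))[fun ω => (b (z ω) - bh (z ω)) * pr ω ^ 4 | m]
          =ᵐ[μ.restrict (A n)] fun ω => (b (z ω) - bh (z ω))
            * ((μ.restrict (A n))[fun ω => pr ω ^ 4 | m]) ω :=
        condExp_mul_of_stronglyMeasurable_left (((hbm.sub hbhm).comp hzm).stronglyMeasurable)
          hint4 (hintp4.restrict)
      refine s1.trans ?_
      filter_upwards [p1, p2, hm3v, hm4v] with ω h1 h2 h3 h4
      simp only [Pi.add_apply]
      rw [h1, h2, h3, h4]
    -- integrability of the pieces of EST under the restricted measure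
    have hch_int : Integrable (fun ω => ch (z ω)) (μ.restrict (A n)) := by
      have h0 : Integrable (fun ω => ch (z ω) * (1:ℝ)) (μ.restrict (A n)) :=
        hmul_int ch hchm (by
          filter_upwards [habs] with ω hω
          linarith [hω.2.2.2.2.2.2]) _ (integrable_const (1:ℝ))
      exact h0.congr (Filter.Eventually.of_forall fun ω => by simp)
    have hE1 : Integrable (fun ω => w1 (z ω) * (pr ω * e ω)) (μ.restrict (A n)) :=
      hmul_int w1 hw1m (by
        filter_upwards [habs] with ω hω
        linarith [hω.2.2.2.2.1]) _ hintpe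
    have hE2 : Integrable (fun ω => w2 (z ω) * (pr ω ^ 2 * e ω)) (μ.restrict (A n)) :=
      hmul_int w2 hw2m (by
        filter_upwards [habs] with ω hω
        linarith [hω.2.2.2.2.2.1]) _ hintp2e
    have split : (μ.restrict (A n))[EST | m] =ᵐ[μ.restrict (A n)]
        (μ.restrict (A n))[fun ω => ch (z ω) | m]
        + (μ.restrict (A n))[fun ω =>
            w1 (z ω) * (pr ω * e ω) + w2 (z ω) * (pr ω ^ 2 * e ω) | m] :=
      condExp_add hch_int (hE1.add hE2) m
    have hchc : (μ.restrict (A n))[fun ω => ch (z ω) | m] =ᵐ[μ.restrict (A n)]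
        fun ω => ch (z ω) :=
      Filter.EventuallyEq.of_eq (condExp_of_stronglyMeasurable hm
        (f := fun ω => ch (z ω)) ((hchm.comp hzm).stronglyMeasurable) hch_int)
    have sum2 : (μ.restrict (A n))[fun ω =>
          w1 (z ω) * (pr ω * e ω) + w2 (z ω) * (pr ω ^ 2 * e ω) | m] =ᵐ[μ.restrict (A n)]
        (μ.restrict (A n))[fun ω => w1 (z ω) * (pr ω * e ω) | m]
        + (μ.restrict (A n))[fun ω => w2 (z ω) * (pr ω ^ 2 * e ω) | m] :=
      condExp_add hE1 hE2 m
    have pull1 : (μ.restrict (A n))[fun ω => w1 (z ω) * (pr ω * e ω) | m]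
        =ᵐ[μ.restrict (A n)] fun ω => w1 (z ω)
          * ((μ.restrict (A n))[fun ω => pr ω * e ω | m]) ω :=
      condExp_mul_of_stronglyMeasurable_left ((hw1m.comp hzm).stronglyMeasurable) hE1
        (hintpe.restrict)
    have pull2 : (μ.restrict (A n))[fun ω => w2 (z ω) * (pr ω ^ 2 * e ω) | m]
        =ᵐ[μ.restrict (A n)] fun ω => w2 (z ω)
          * ((μ.restrict (A n))[fun ω => pr ω ^ 2 * e ω | m]) ω :=
      condExp_mul_of_stronglyMeasurable_left ((hw2m.comp hzm).stronglyMeasurable) hE2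
        (hintp2e.restrict)
    have final : (μ.restrict (A n))[EST | m] =ᵐ[μ.restrict (A n)] fun ω => c (z ω) := by
      filter_upwards [split, hchc, sum2, pull1, pull2, hq1v, hq2v,
        ae_restrict_of_ae halg] with ω k0 k1 k2 k3 k4 k5 k6 k7
      simp only [Pi.add_apply] at k0 k2
      rw [k0, k1, k2, k3, k4, k5, k6]
      exact k7
    have main : μ[EST | m] =ᵐ[μ.restrict (A n)] (μ.restrict (A n))[EST | m] :=
      (condExp_restrict_ae_eq_restrict hm (hAm n) hintest).symm
    exact main.trans final
  have hae : ∀ᵐ ω ∂μ, ∀ k : ℕ, ω ∈ A k → (μ[EST | m]) ω = c (z ω) := by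
    rw [MeasureTheory.ae_all_iff]
    intro k
    exact (ae_restrict_iff' (hAm0 k)).mp (key k)
  filter_upwards [hae] with ω hω
  obtain ⟨k, hk⟩ := exists_nat_ge (N (z ω))
  exact hω k hk



/-- Doubly robust personalized pricing estimators (quadratic revenue):
under `E[r ∣ σ(p,z)] = a(z)p + b(z)p²`, `E[p^k ∣ σ(z)] = μ_k(z)` for `k = 2,3,4` and
`D(z) = μ₂(z)μ₄(z) − μ₃(z)² ≠ 0` a.s., the doubly robust estimates satisfy
`E[a_DR ∣ σ(z)] = a(z)` and `E[b_DR ∣ σ(z)] = b(z)` almost surely. -/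
theorem pricing_quadratic_doubly_robust
    {Ω Z : Type*} [MeasurableSpace Ω] [MeasurableSpace Z]
    (μ : Measure Ω) [IsProbabilityMeasure μ]
    (z : Ω → Z) (pr r : Ω → ℝ)
    (hz : Measurable z) (hpr : Measurable pr) (hr : Measurable r)
    (a b : Z → ℝ) (ham : Measurable a) (hbm : Measurable b)
    (μ2 μ3 μ4 : Z → ℝ) (hμ2m : Measurable μ2) (hμ3m : Measurable μ3) (hμ4m : Measurable μ4)
    -- quadratic revenue model
    (hrev : μ[r | MeasurableSpace.comap (fun ω => (pr ω, z ω)) inferInstance]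
        =ᵐ[μ] fun ω => a (z ω) * pr ω + b (z ω) * pr ω ^ 2)
    -- conditional price moments
    (hm2 : μ[fun ω => pr ω ^ 2 | MeasurableSpace.comap z inferInstance]
        =ᵐ[μ] fun ω => μ2 (z ω))
    (hm3 : μ[fun ω => pr ω ^ 3 | MeasurableSpace.comap z inferInstance]
        =ᵐ[μ] fun ω => μ3 (z ω))
    (hm4 : μ[fun ω => pr ω ^ 4 | MeasurableSpace.comap z inferInstance]
        =ᵐ[μ] fun ω => μ4 (z ω))
    (hD : ∀ᵐ ω ∂μ, μ2 (z ω) * μ4 (z ω) - μ3 (z ω) ^ 2 ≠ 0)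
    -- nuisance estimates
    (ah bh : Z → ℝ) (hahm : Measurable ah) (hbhm : Measurable bh)
    -- all displayed conditional expectations are well defined
    (hintr : Integrable r μ)
    (hintp2 : Integrable (fun ω => pr ω ^ 2) μ)
    (hintp3 : Integrable (fun ω => pr ω ^ 3) μ)
    (hintp4 : Integrable (fun ω => pr ω ^ 4) μ)
    (hinte : Integrable (fun ω => r ω - ah (z ω) * pr ω - bh (z ω) * pr ω ^ 2) μ)
    (hintpe : Integrable (fun ω =>
      pr ω * (r ω - ah (z ω) * pr ω - bh (z ω) * pr ω ^ 2)) μ)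
    (hintp2e : Integrable (fun ω =>
      pr ω ^ 2 * (r ω - ah (z ω) * pr ω - bh (z ω) * pr ω ^ 2)) μ)
    (hintaDR : Integrable (fun ω => ah (z ω)
      + ((μ4 (z ω) * pr ω - μ3 (z ω) * pr ω ^ 2)
            / (μ2 (z ω) * μ4 (z ω) - μ3 (z ω) ^ 2))
        * (r ω - ah (z ω) * pr ω - bh (z ω) * pr ω ^ 2)) μ)
    (hintbDR : Integrable (fun ω => bh (z ω)
      + ((μ2 (z ω) * pr ω ^ 2 - μ3 (z ω) * pr ω)
            / (μ2 (z ω) * μ4 (z ω) - μ3 (z ω) ^ 2))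
        * (r ω - ah (z ω) * pr ω - bh (z ω) * pr ω ^ 2)) μ) :
    (μ[fun ω => ah (z ω)
        + ((μ4 (z ω) * pr ω - μ3 (z ω) * pr ω ^ 2)
              / (μ2 (z ω) * μ4 (z ω) - μ3 (z ω) ^ 2))
          * (r ω - ah (z ω) * pr ω - bh (z ω) * pr ω ^ 2) |
      MeasurableSpace.comap z inferInstance] =ᵐ[μ] fun ω => a (z ω)) ∧
    (μ[fun ω => bh (z ω)
        + ((μ2 (z ω) * pr ω ^ 2 - μ3 (z ω) * pr ω)
              / (μ2 (z ω) * μ4 (z ω) - μ3 (z ω) ^ 2))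
          * (r ω - ah (z ω) * pr ω - bh (z ω) * pr ω ^ 2) |
      MeasurableSpace.comap z inferInstance] =ᵐ[μ] fun ω => b (z ω)) := by
  constructor
  · have hfun : (fun ω => ah (z ω)
        + ((μ4 (z ω) * pr ω - μ3 (z ω) * pr ω ^ 2)
              / (μ2 (z ω) * μ4 (z ω) - μ3 (z ω) ^ 2))
          * (r ω - ah (z ω) * pr ω - bh (z ω) * pr ω ^ 2))
        = fun ω => ah (z ω)
          + ((fun x => μ4 x / (μ2 x * μ4 x - μ3 x ^ 2)) (z ω)
              * (pr ω * (r ω - ah (z ω) * pr ω - bh (z ω) * pr ω ^ 2))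
            + (fun x => -(μ3 x / (μ2 x * μ4 x - μ3 x ^ 2))) (z ω)
              * (pr ω ^ 2 * (r ω - ah (z ω) * pr ω - bh (z ω) * pr ω ^ 2))) := by
      funext ω; simp only; ring
    rw [hfun]
    exact pricing_master μ z pr r hz hpr a b ah bh μ2 μ3 μ4
      (fun x => μ4 x / (μ2 x * μ4 x - μ3 x ^ 2))
      (fun x => -(μ3 x / (μ2 x * μ4 x - μ3 x ^ 2))) a ah
      ham hbm hahm hbhm
      (hμ4m.div ((hμ2m.mul hμ4m).sub (hμ3m.pow_const 2)))
      ((hμ3m.div ((hμ2m.mul hμ4m).sub (hμ3m.pow_const 2))).neg)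
      hahm hrev hm2 hm3 hm4 hintr hintp2 hintp3 hintp4 hinte hintpe hintp2e
      (by filter_upwards [hD] with ω hω
          have hω' : μ4 (z ω) * μ2 (z ω) - μ3 (z ω) ^ 2 ≠ 0 := by rwa [mul_comm] at hω
          field_simp
          ring)
      (hintaDR.congr (Filter.Eventually.of_forall fun ω => by simp only; ring))
  · have hfun : (fun ω => bh (z ω)
        + ((μ2 (z ω) * pr ω ^ 2 - μ3 (z ω) * pr ω)
              / (μ2 (z ω) * μ4 (z ω) - μ3 (z ω) ^ 2))
          * (r ω - ah (z ω) * pr ω - bh (z ω) * pr ω ^ 2))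
        = fun ω => bh (z ω)
          + ((fun x => -(μ3 x / (μ2 x * μ4 x - μ3 x ^ 2))) (z ω)
              * (pr ω * (r ω - ah (z ω) * pr ω - bh (z ω) * pr ω ^ 2))
            + (fun x => μ2 x / (μ2 x * μ4 x - μ3 x ^ 2)) (z ω)
              * (pr ω ^ 2 * (r ω - ah (z ω) * pr ω - bh (z ω) * pr ω ^ 2))) := by
      funext ω; simp only; ring
    rw [hfun]
    exact pricing_master μ z pr r hz hpr a b ah bh μ2 μ3 μ4
      (fun x => -(μ3 x / (μ2 x * μ4 x - μ3 x ^ 2)))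
      (fun x => μ2 x / (μ2 x * μ4 x - μ3 x ^ 2)) b bh
      ham hbm hahm hbhm
      ((hμ3m.div ((hμ2m.mul hμ4m).sub (hμ3m.pow_const 2))).neg)
      (hμ2m.div ((hμ2m.mul hμ4m).sub (hμ3m.pow_const 2)))
      hbhm hrev hm2 hm3 hm4 hintr hintp2 hintp3 hintp4 hinte hintpe hintp2e
      (by filter_upwards [hD] with ω hω
          have hω' : μ4 (z ω) * μ2 (z ω) - μ3 (z ω) ^ 2 ≠ 0 := by rwa [mul_comm] at hω
          field_simp
          ring)
      (hintbDR.congr (Filter.Eventually.of_forall fun ω => by simp only; ring))
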